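/- Rank-one normalization integral: for real ι, b > 0 and ν > ι + b, the integral over ℝ of (cosh t)^{−2ν}·|2 sinh t|^{2b}·|2 sinh 2t|^{ι} dt equals 2^{2ι+2b}·B((ι + 1 + 2b)/2, ν − ι − b), where B is the Beta function. -/

import Mathlib

open MeasureTheory

private lemma betaRealIntegrable (x y : ℝ) (hx : 0 < x) (hy : 0 < y) :
    MeasureTheory.IntegrableOn (fun z : ℝ => z ^ (x - 1) * (1 - z) ^ (y - 1))
      (Set.Ioo (0:ℝ) 1) := by
  have hC := (Complex.betaIntegral_convergent (u := (x:ℂ)) (v := (y:ℂ))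
    (by simpa using hx) (by simpa using hy)).1
  have hC2 : IntegrableOn (fun z : ℝ => ((z ^ (x - 1) * (1 - z) ^ (y - 1) : ℝ) : ℂ))
      (Set.Ioo (0:ℝ) 1) volume := by
    refine (hC.mono_set Set.Ioo_subset_Ioc_self).congr_fun ?_ measurableSet_Ioo
    intro z hz
    show (z:ℂ) ^ ((x:ℂ) - 1) * (1 - (z:ℂ)) ^ ((y:ℂ) - 1)
      = ((z ^ (x - 1) * (1 - z) ^ (y - 1) : ℝ) : ℂ)
    rw [Complex.ofReal_mul, Complex.ofReal_cpow hz.1.le,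
      Complex.ofReal_cpow (by linarith [hz.2] : (0:ℝ) ≤ 1 - z)]
    push_cast
    ring
  have hm : AEStronglyMeasurable (fun z : ℝ => z ^ (x - 1) * (1 - z) ^ (y - 1))
      (volume.restrict (Set.Ioo (0:ℝ) 1)) := by
    refine ContinuousOn.aestronglyMeasurable ?_ measurableSet_Ioo
    exact (continuousOn_id.rpow_const fun z hz => Or.inl hz.1.ne').mul
      ((continuousOn_const.sub continuousOn_id).rpow_const
        fun z hz => Or.inl (by change z ∈ Set.Ioo (0:ℝ) 1 at hz; have := hz.2; intro h; simp at h; linarith))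
  have hnorm := hC2.norm
  simp only [Complex.norm_real] at hnorm
  exact (integrable_norm_iff hm).1 hnorm

private lemma betaReal (x y : ℝ) (hx : 0 < x) (hy : 0 < y) :
    ∫ z in Set.Ioo (0:ℝ) 1, z ^ (x - 1) * (1 - z) ^ (y - 1) =
      Real.Gamma x * Real.Gamma y / Real.Gamma (x + y) := by
  have hne : Complex.Gamma ((x:ℂ) + y) ≠ 0 := by
    rw [← Complex.ofReal_add, Complex.Gamma_ofReal]
    exact_mod_cast (Real.Gamma_pos_of_pos (by linarith)).ne'
  have h := Complex.Gamma_mul_Gamma_eq_betaIntegral (s := (x:ℂ)) (t := (y:ℂ))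
    (by simpa using hx) (by simpa using hy)
  have hbeta : Complex.betaIntegral x y =
      ((Real.Gamma x * Real.Gamma y / Real.Gamma (x + y) : ℝ) : ℂ) := by
    rw [Complex.ofReal_div, Complex.ofReal_mul, ← Complex.Gamma_ofReal,
      ← Complex.Gamma_ofReal, ← Complex.Gamma_ofReal, Complex.ofReal_add, h]
    rw [mul_comm, mul_div_assoc, div_self hne, mul_one]
  have hofReal : Complex.betaIntegral x y =
      Complex.ofReal (∫ z in (0:ℝ)..1, z ^ (x - 1) * (1 - z) ^ (y - 1)) := by
    rw [Complex.betaIntegral, ← intervalIntegral.integral_ofReal]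
    refine intervalIntegral.integral_congr fun z hz => ?_
    rw [Set.uIcc_of_le zero_le_one] at hz
    show (z:ℂ) ^ ((x:ℂ) - 1) * (1 - (z:ℂ)) ^ ((y:ℂ) - 1)
      = ((z ^ (x - 1) * (1 - z) ^ (y - 1) : ℝ) : ℂ)
    rw [Complex.ofReal_mul, Complex.ofReal_cpow hz.1,
      Complex.ofReal_cpow (by linarith [hz.2] : (0:ℝ) ≤ 1 - z)]
    push_cast
    ring
  have := hofReal.symm.trans hbeta
  rw [Complex.ofReal_inj] at this
  rw [← this, intervalIntegral.integral_of_le zero_le_one,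
    MeasureTheory.integral_Ioc_eq_integral_Ioo]

theorem rank_one_normalization_integral (ι b ν : ℝ) (hι : 0 < ι) (hb : 0 < b)
    (hν : ι + b < ν) :
    ∫ t : ℝ, Real.cosh t ^ (-2 * ν) * |2 * Real.sinh t| ^ (2 * b) *
        |2 * Real.sinh (2 * t)| ^ ι
      = 2 ^ (2 * ι + 2 * b) *
        (Real.Gamma ((ι + 1 + 2 * b) / 2) * Real.Gamma (ν - ι - b) /
          Real.Gamma ((ι + 1 + 2 * b) / 2 + (ν - ι - b))) := by
  have hX : 0 < (ι + 1 + 2 * b) / 2 := by linarith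
  have hY : 0 < ν - ι - b := by linarith
  set F : ℝ → ℝ := fun t => Real.cosh t ^ (-2 * ν) * |2 * Real.sinh t| ^ (2 * b) *
    |2 * Real.sinh (2 * t)| ^ ι with hF
  set f : ℝ → ℝ := fun z => z ^ ((ι + 1 + 2 * b) / 2 - 1) * (1 - z) ^ (ν - ι - b - 1) with hf
  set g : ℝ → ℝ := fun t => 1 - ((Real.cosh t) ^ 2)⁻¹ with hg
  -- derivative of g
  have hg' : ∀ t : ℝ, HasDerivAt g (2 * Real.sinh t / Real.cosh t ^ 3) t := by
    intro t
    have hc := Real.cosh_pos t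
    have h1 : HasDerivAt (fun t => (Real.cosh t) ^ 2)
        ((2:ℕ) * Real.cosh t ^ 1 * Real.sinh t) t := (Real.hasDerivAt_cosh t).pow 2
    have h2 := (h1.inv (by positivity)).const_sub 1
    refine h2.congr_deriv ?_
    field_simp
    ring
  -- injectivity of g on Ioi 0
  have hinj : Set.InjOn g (Set.Ioi 0) := by
    intro p hp q hq hpq
    simp only [hg] at hpq
    have h1 : (Real.cosh p) ^ 2 = (Real.cosh q) ^ 2 := by
      have hcp : ((Real.cosh p) ^ 2)⁻¹ = ((Real.cosh q) ^ 2)⁻¹ := by linarith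
      have := Real.cosh_pos p
      have := Real.cosh_pos q
      exact inv_injective hcp
    have h2 : Real.cosh p = Real.cosh q := by
      nlinarith [Real.cosh_pos p, Real.cosh_pos q]
    have h3 : |p| = |q| := by
      by_contra hne
      rcases lt_or_gt_of_ne hne with h | h
      · exact absurd (Real.cosh_lt_cosh.2 h) (by rw [h2]; exact lt_irrefl _)
      · exact absurd (Real.cosh_lt_cosh.2 h) (by rw [h2]; exact lt_irrefl _)
    rwa [abs_of_pos hp, abs_of_pos hq] at h3
  -- image of g
  have himg : g '' (Set.Ioi 0) = Set.Ioo 0 1 := by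
    ext z
    constructor
    · rintro ⟨t, ht, rfl⟩
      have hc : 1 < Real.cosh t := Real.one_lt_cosh.2 (ne_of_gt ht)
      have hc2 : 1 < (Real.cosh t) ^ 2 := by nlinarith
      have hc2' : 0 < ((Real.cosh t) ^ 2)⁻¹ := by positivity
      have hlt : ((Real.cosh t) ^ 2)⁻¹ < 1 := inv_lt_one_of_one_lt₀ hc2
      exact ⟨by simp only [hg]; linarith, by simp only [hg]; linarith⟩
    · rintro ⟨hz0, hz1⟩
      have h1z : 0 < 1 - z := by linarith
      refine ⟨Real.arsinh (Real.sqrt (z / (1 - z))), ?_, ?_⟩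
      · rw [Set.mem_Ioi, Real.arsinh_pos_iff]
        exact Real.sqrt_pos.2 (div_pos hz0 h1z)
      · have hc2 : (Real.cosh (Real.arsinh (Real.sqrt (z / (1 - z))))) ^ 2
            = z / (1 - z) + 1 := by
          rw [Real.cosh_sq, Real.sinh_arsinh, Real.sq_sqrt (div_pos hz0 h1z).le]
        simp only [hg, hc2]
        field_simp
        ring
  -- pointwise identity on Ioi 0
  have hpt : ∀ t ∈ Set.Ioi (0:ℝ),
      |2 * Real.sinh t / Real.cosh t ^ 3| • f (g t)
        = 2 * (Real.sinh t ^ (ι + 2 * b) * Real.cosh t ^ (ι - 2 * ν)) := by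
    intro t ht
    have hs : 0 < Real.sinh t := Real.sinh_pos_iff.2 ht
    have hc : 0 < Real.cosh t := Real.cosh_pos t
    have hgt : g t = Real.sinh t ^ 2 / Real.cosh t ^ 2 := by
      simp only [hg]
      have := Real.cosh_sq t
      field_simp
      linarith
    have h1gt : (1:ℝ) - Real.sinh t ^ 2 / Real.cosh t ^ 2 = ((Real.cosh t) ^ 2)⁻¹ := by
      rw [← hgt]; simp only [hg]; ring
    rw [smul_eq_mul, hf]
    simp only [hgt, h1gt]
    rw [abs_of_pos (by positivity)]
    have e1 : (Real.sinh t ^ 2 / Real.cosh t ^ 2) ^ ((ι + 1 + 2 * b) / 2 - 1)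
        = Real.exp ((2 * Real.log (Real.sinh t) - 2 * Real.log (Real.cosh t))
          * ((ι + 1 + 2 * b) / 2 - 1)) := by
      rw [Real.rpow_def_of_pos (by positivity), Real.log_div (by positivity) (by positivity),
        Real.log_pow, Real.log_pow]
      norm_num
    have e2 : (((Real.cosh t) ^ 2)⁻¹) ^ (ν - ι - b - 1)
        = Real.exp ((-(2 * Real.log (Real.cosh t))) * (ν - ι - b - 1)) := by
      rw [Real.rpow_def_of_pos (by positivity), Real.log_inv, Real.log_pow]
      norm_num
    have e3 : Real.sinh t = Real.exp (Real.log (Real.sinh t)) := (Real.exp_log hs).symm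
    have e4 : Real.cosh t ^ 3 = Real.exp (3 * Real.log (Real.cosh t)) := by
      rw [← Real.exp_log (show (0:ℝ) < Real.cosh t ^ 3 by positivity), Real.log_pow,
        Real.exp_eq_exp]
      norm_num
    have e5 : Real.sinh t ^ (ι + 2 * b)
        = Real.exp (Real.log (Real.sinh t) * (ι + 2 * b)) := Real.rpow_def_of_pos hs _
    have e6 : Real.cosh t ^ (ι - 2 * ν)
        = Real.exp (Real.log (Real.cosh t) * (ι - 2 * ν)) := Real.rpow_def_of_pos hc _
    rw [e1, e2, e5, e6, div_eq_mul_inv]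
    generalize hls : Real.log (Real.sinh t) = ls
    generalize hlc : Real.log (Real.cosh t) = lc
    rw [show Real.sinh t = Real.exp ls by rw [← hls, Real.exp_log hs],
      show (Real.cosh t ^ 3)⁻¹ = Real.exp (-(3 * lc)) by
        rw [← hlc, e4, ← Real.exp_neg]]
    have key2 : Real.exp ls * Real.exp (-(3 * lc)) *
        (Real.exp ((2 * ls - 2 * lc) * ((ι + 1 + 2 * b) / 2 - 1)) *
          Real.exp (-(2 * lc) * (ν - ι - b - 1)))
        = Real.exp (ls * (ι + 2 * b)) * Real.exp (lc * (ι - 2 * ν)) := by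
      simp only [← Real.exp_add]
      rw [Real.exp_eq_exp]
      ring
    linear_combination 2 * key2
  have hptF : ∀ t ∈ Set.Ioi (0:ℝ),
      F t = 2 ^ (2 * ι + 2 * b)
        * (Real.sinh t ^ (ι + 2 * b) * Real.cosh t ^ (ι - 2 * ν)) := by
    intro t ht
    have hs : 0 < Real.sinh t := Real.sinh_pos_iff.2 ht
    have hc : 0 < Real.cosh t := Real.cosh_pos t
    simp only [hF, Real.sinh_two_mul]
    rw [abs_of_pos (by positivity), abs_of_pos (by positivity)]
    have e0 : Real.cosh t ^ (-2 * ν)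
        = Real.exp (Real.log (Real.cosh t) * (-2 * ν)) := Real.rpow_def_of_pos hc _
    have e1 : (2 * Real.sinh t) ^ (2 * b)
        = Real.exp ((Real.log 2 + Real.log (Real.sinh t)) * (2 * b)) := by
      rw [Real.rpow_def_of_pos (by positivity), Real.log_mul two_ne_zero hs.ne']
    have e2 : (2 * (2 * Real.sinh t * Real.cosh t)) ^ ι
        = Real.exp ((Real.log 2 + (Real.log 2 + Real.log (Real.sinh t)
          + Real.log (Real.cosh t))) * ι) := by
      rw [Real.rpow_def_of_pos (by positivity),
        Real.log_mul two_ne_zero (by positivity),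
        Real.log_mul (by positivity) hc.ne', Real.log_mul two_ne_zero hs.ne']
    have e3 : (2:ℝ) ^ (2 * ι + 2 * b)
        = Real.exp (Real.log 2 * (2 * ι + 2 * b)) := Real.rpow_def_of_pos two_pos _
    have e5 : Real.sinh t ^ (ι + 2 * b)
        = Real.exp (Real.log (Real.sinh t) * (ι + 2 * b)) := Real.rpow_def_of_pos hs _
    have e6 : Real.cosh t ^ (ι - 2 * ν)
        = Real.exp (Real.log (Real.cosh t) * (ι - 2 * ν)) := Real.rpow_def_of_pos hc _
    rw [e0, e1, e2, e3, e5, e6]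
    simp only [← Real.exp_add]
    rw [Real.exp_eq_exp]
    ring
  -- change of variables
  have key : ∫ z in Set.Ioo (0:ℝ) 1, f z
      = ∫ t in Set.Ioi (0:ℝ), |2 * Real.sinh t / Real.cosh t ^ 3| • f (g t) := by
    rw [← himg]
    exact integral_image_eq_integral_abs_deriv_smul measurableSet_Ioi
      (fun t _ => (hg' t).hasDerivWithinAt) hinj f
  -- integrability
  have hfi : IntegrableOn f (Set.Ioo (0:ℝ) 1) := betaRealIntegrable _ _ hX hY
  have hInt1 : IntegrableOn (fun t => |2 * Real.sinh t / Real.cosh t ^ 3| • f (g t))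
      (Set.Ioi (0:ℝ)) :=
    (integrableOn_image_iff_integrableOn_abs_deriv_smul measurableSet_Ioi
      (fun t _ => (hg' t).hasDerivWithinAt) hinj f).1 (himg ▸ hfi)
  have hIntF : IntegrableOn F (Set.Ioi (0:ℝ)) := by
    refine MeasureTheory.IntegrableOn.congr_fun
      (hInt1.const_mul (2 ^ (2 * ι + 2 * b) / 2)) ?_ measurableSet_Ioi
    intro t ht
    show 2 ^ (2 * ι + 2 * b) / 2 * (|2 * Real.sinh t / Real.cosh t ^ 3| • f (g t)) = F t
    rw [hpt t ht, hptF t ht]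
    ring
  have hFeven : ∀ t : ℝ, F (-t) = F t := by
    intro t
    simp only [hF, Real.cosh_neg, mul_neg, Real.sinh_neg, abs_neg, neg_mul]
  have hIntIic : IntegrableOn F (Set.Iic 0) := by
    have m : MeasurableEmbedding fun x : ℝ => -x :=
      (Homeomorph.neg ℝ).measurableEmbedding
    have : IntegrableOn F (Set.Iic 0) (Measure.map (fun x : ℝ => -x) volume) := by
      rw [m.integrableOn_map_iff]
      have : (F ∘ fun x : ℝ => -x) = F := funext fun t => hFeven t
      rw [this, show ((fun x : ℝ => -x) ⁻¹' Set.Iic 0) = Set.Ici 0 by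
        ext u; simp]
      exact (integrableOn_Ici_iff_integrableOn_Ioi (by simp)).2 hIntF
    rwa [Measure.map_neg_eq_self (volume : Measure ℝ)] at this
  -- value over Ioi 0
  have hIoi : ∫ t in Set.Ioi (0:ℝ), F t
      = 2 ^ (2 * ι + 2 * b) / 2 * ∫ z in Set.Ioo (0:ℝ) 1, f z := by
    rw [key, ← MeasureTheory.integral_const_mul]
    refine setIntegral_congr_fun measurableSet_Ioi fun t ht => ?_
    rw [hptF t ht, hpt t ht]
    ring
  have hIic : ∫ t in Set.Iic (0:ℝ), F t = ∫ t in Set.Ioi (0:ℝ), F t := by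
    have := integral_comp_neg_Iic (0:ℝ) F
    simp only [hFeven, neg_zero] at this
    exact this
  have hsplit := intervalIntegral.integral_Iic_add_Ioi (μ := volume) hIntIic hIntF
  have hbeta := betaReal ((ι + 1 + 2 * b) / 2) (ν - ι - b) hX hY
  calc ∫ t : ℝ, F t = (∫ t in Set.Iic (0:ℝ), F t) + ∫ t in Set.Ioi (0:ℝ), F t :=
        hsplit.symm
    _ = 2 * ∫ t in Set.Ioi (0:ℝ), F t := by rw [hIic]; ring
    _ = 2 * (2 ^ (2 * ι + 2 * b) / 2 * ∫ z in Set.Ioo (0:ℝ) 1, f z) := by rw [hIoi]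
    _ = 2 ^ (2 * ι + 2 * b) * ∫ z in Set.Ioo (0:ℝ) 1, f z := by ring
    _ = 2 ^ (2 * ι + 2 * b) *
        (Real.Gamma ((ι + 1 + 2 * b) / 2) * Real.Gamma (ν - ι - b) /
          Real.Gamma ((ι + 1 + 2 * b) / 2 + (ν - ι - b))) := by rw [hf, hbeta]
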